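/- Continuity of the Kalman gain in the covariance: let Γ ∈ ℝ^{m×m} be symmetric positive definite with smallest eigenvalue γ_min, H ∈ ℝ^{m×d}, C ∈ ℝ^{d×d} symmetric positive semidefinite with gain K = CH^T(HCH^T + Γ)^{-1}, and let C^{ML} be any symmetric d×d matrix with positive-part truncation C̃^{ML} and multilevel gain K^{ML} = C^{ML}H^T(HC̃^{ML}H^T + Γ)^{-1}. Then |K - K^{ML}| ≤ (|H|/γ_min)(1 + 2|KH|) |C - C^{ML}|. -/

import Mathlib

open scoped Matrix

noncomputable def opNorm {m n : ℕ} (A : Matrix (Fin m) (Fin n) ℝ) : ℝ :=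
  ‖LinearMap.toContinuousLinearMap (Matrix.toEuclideanLin A)‖

section Aux

open scoped Matrix.Norms.L2Operator

noncomputable def toE {n : ℕ} (x : Fin n → ℝ) : EuclideanSpace ℝ (Fin n) :=
  (WithLp.equiv 2 (Fin n → ℝ)).symm x

lemma opNorm_eq_l2 {m n : ℕ} (A : Matrix (Fin m) (Fin n) ℝ) : opNorm A = ‖A‖ := rfl

lemma inner_toE {n : ℕ} (x y : Fin n → ℝ) : @inner ℝ _ _ (toE x) (toE y) = x ⬝ᵥ y := by
  simp [toE, PiLp.inner_apply, dotProduct, mul_comm]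

lemma norm_toE_sq {n : ℕ} (x : Fin n → ℝ) : ‖toE x‖ ^ 2 = x ⬝ᵥ x := by
  rw [← real_inner_self_eq_norm_sq, inner_toE]

lemma dot_le_norm_mul {n : ℕ} (x y : Fin n → ℝ) : x ⬝ᵥ y ≤ ‖toE x‖ * ‖toE y‖ := by
  rw [← inner_toE]; exact real_inner_le_norm _ _

lemma mulVec_norm_le {m n : ℕ} (A : Matrix (Fin m) (Fin n) ℝ) (x : Fin n → ℝ) :
    ‖toE (A *ᵥ x)‖ ≤ ‖A‖ * ‖toE x‖ :=
  Matrix.l2_opNorm_mulVec A (toE x)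

lemma opNorm_le_bound' {m n : ℕ} (A : Matrix (Fin m) (Fin n) ℝ) {c : ℝ} (hc : 0 ≤ c)
    (h : ∀ x : Fin n → ℝ, ‖toE (A *ᵥ x)‖ ≤ c * ‖toE x‖) : ‖A‖ ≤ c := by
  refine ContinuousLinearMap.opNorm_le_bound _ hc fun y => ?_
  exact h (WithLp.equiv 2 (Fin n → ℝ) y)

lemma quad_le_opNorm {n : ℕ} (A : Matrix (Fin n) (Fin n) ℝ) (u : Fin n → ℝ) (hu : u ⬝ᵥ u = 1) :
    u ⬝ᵥ (A *ᵥ u) ≤ ‖A‖ := by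
  have h1 : ‖toE u‖ = 1 := by
    have := norm_toE_sq u
    rw [hu] at this
    nlinarith [norm_nonneg (toE u)]
  calc u ⬝ᵥ (A *ᵥ u) ≤ ‖toE u‖ * ‖toE (A *ᵥ u)‖ := dot_le_norm_mul _ _
    _ ≤ ‖toE u‖ * (‖A‖ * ‖toE u‖) :=
        mul_le_mul_of_nonneg_left (mulVec_norm_le A u) (norm_nonneg _)
    _ = ‖A‖ := by rw [h1]; ring

lemma vecMulVec_mulVec {d : ℕ} (u v x : Fin d → ℝ) :
    Matrix.vecMulVec u v *ᵥ x = (v ⬝ᵥ x) • u := by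
  ext i
  simp only [Matrix.mulVec, Matrix.vecMulVec_apply, dotProduct, Pi.smul_apply,
    smul_eq_mul, Finset.sum_mul]
  exact Finset.sum_congr rfl fun j _ => by ring

lemma sum_mulVec' {ι : Type*} {d e : ℕ} (s : Finset ι) (f : ι → Matrix (Fin e) (Fin d) ℝ)
    (x : Fin d → ℝ) : (∑ k ∈ s, f k) *ᵥ x = ∑ k ∈ s, (f k *ᵥ x) := by
  ext i
  simp only [Matrix.mulVec, dotProduct, Finset.sum_apply, Matrix.sum_apply,
    Finset.sum_mul]
  rw [Finset.sum_comm]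

lemma dot_sum' {ι : Type*} {d : ℕ} (s : Finset ι) (x : Fin d → ℝ) (f : ι → (Fin d → ℝ)) :
    x ⬝ᵥ (∑ k ∈ s, f k) = ∑ k ∈ s, x ⬝ᵥ f k := by
  simp only [dotProduct, Finset.sum_apply, Finset.mul_sum]
  rw [Finset.sum_comm]

lemma dot_sum_sum {ι : Type*} {d : ℕ} (s : Finset ι) (f g : ι → (Fin d → ℝ)) :
    (∑ k ∈ s, f k) ⬝ᵥ (∑ l ∈ s, g l) = ∑ k ∈ s, ∑ l ∈ s, (f k ⬝ᵥ g l) := by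
  simp only [dotProduct, Finset.sum_apply]
  calc ∑ x, (∑ k ∈ s, f k x) * (∑ l ∈ s, g l x)
      = ∑ x, ∑ k ∈ s, ∑ l ∈ s, f k x * g l x :=
        Finset.sum_congr rfl fun x _ => Finset.sum_mul_sum _ _ _ _
    _ = ∑ k ∈ s, ∑ x, ∑ l ∈ s, f k x * g l x := Finset.sum_comm
    _ = ∑ k ∈ s, ∑ l ∈ s, ∑ x, f k x * g l x :=
        Finset.sum_congr rfl fun k _ => Finset.sum_comm

lemma bessel_eq {d : ℕ} (q : Fin d → (Fin d → ℝ))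
    (horth : ∀ k l, q k ⬝ᵥ q l = if k = l then (1 : ℝ) else 0) (x : Fin d → ℝ) :
    ∑ k, (q k ⬝ᵥ x)^2 = x ⬝ᵥ x := by
  classical
  set Q : Matrix (Fin d) (Fin d) ℝ := Matrix.of q with hQ
  have hQQ : Q * Qᵀ = 1 := by
    ext k l
    simp only [Matrix.mul_apply, Matrix.transpose_apply, Matrix.one_apply]
    simpa [dotProduct, hQ] using horth k l
  have hQtQ : Qᵀ * Q = 1 := mul_eq_one_comm.mp hQQ
  have h1 : ∑ k, (q k ⬝ᵥ x)^2 = (Q *ᵥ x) ⬝ᵥ (Q *ᵥ x) := by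
    simp only [dotProduct, Matrix.mulVec, sq]
    rfl
  rw [h1, Matrix.dotProduct_mulVec, Matrix.vecMul_mulVec, hQtQ, Matrix.vecMul_one]

lemma trunc_norm_le {d : ℕ} (lam : Fin d → ℝ) (q : Fin d → (Fin d → ℝ))
    (horth : ∀ k l, q k ⬝ᵥ q l = if k = l then (1 : ℝ) else 0)
    (s : Finset (Fin d)) (β : ℝ) (hβ0 : 0 ≤ β) (hβ : ∀ k ∈ s, |lam k| ≤ β) :
    ‖∑ k ∈ s, lam k • Matrix.vecMulVec (q k) (q k)‖ ≤ β := by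
  apply opNorm_le_bound' _ hβ0
  intro x
  have hAx : (∑ k ∈ s, lam k • Matrix.vecMulVec (q k) (q k)) *ᵥ x
      = ∑ k ∈ s, (lam k * (q k ⬝ᵥ x)) • q k := by
    rw [sum_mulVec']
    refine Finset.sum_congr rfl fun k _ => ?_
    rw [Matrix.smul_mulVec, vecMulVec_mulVec, smul_smul]
  have hsq : (∑ k ∈ s, (lam k * (q k ⬝ᵥ x)) • q k) ⬝ᵥ (∑ k ∈ s, (lam k * (q k ⬝ᵥ x)) • q k)
      = ∑ k ∈ s, (lam k)^2 * (q k ⬝ᵥ x)^2 := by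
    rw [dot_sum_sum]
    refine Finset.sum_congr rfl fun k hk => ?_
    rw [Finset.sum_eq_single k]
    · rw [smul_dotProduct, dotProduct_smul, horth k k]
      simp; ring
    · intro l hl hne
      rw [smul_dotProduct, dotProduct_smul, horth k l, if_neg (Ne.symm hne)]
      simp
    · intro h; exact absurd hk h
  have key : ‖toE ((∑ k ∈ s, lam k • Matrix.vecMulVec (q k) (q k)) *ᵥ x)‖ ^ 2
      ≤ (β * ‖toE x‖) ^ 2 := by
    rw [norm_toE_sq, hAx, hsq, mul_pow, norm_toE_sq]
    calc ∑ k ∈ s, (lam k)^2 * (q k ⬝ᵥ x)^2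
        ≤ ∑ k ∈ s, β^2 * (q k ⬝ᵥ x)^2 := by
          refine Finset.sum_le_sum fun k hk => ?_
          have : (lam k)^2 ≤ β^2 := by
            have := hβ k hk
            nlinarith [abs_nonneg (lam k), le_abs_self (lam k), neg_abs_le (lam k)]
          exact mul_le_mul_of_nonneg_right this (sq_nonneg _)
      _ ≤ ∑ k, β^2 * (q k ⬝ᵥ x)^2 := by
          refine Finset.sum_le_sum_of_subset_of_nonneg (Finset.subset_univ s) fun k _ _ =>
            mul_nonneg (sq_nonneg _) (sq_nonneg _)
      _ = β^2 * (x ⬝ᵥ x) := by rw [← Finset.mul_sum, bessel_eq q horth x]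
  have h0 : (0:ℝ) ≤ β * ‖toE x‖ := mul_nonneg hβ0 (norm_nonneg _)
  nlinarith [norm_nonneg (toE ((∑ k ∈ s, lam k • Matrix.vecMulVec (q k) (q k)) *ᵥ x))]

lemma posdef_quad_lower {m : ℕ} (Γ : Matrix (Fin m) (Fin m) ℝ) (hΓ : Γ.PosDef) (γmin : ℝ)
    (hlb : ∀ i, γmin ≤ hΓ.1.eigenvalues i) (x : Fin m → ℝ) :
    γmin * (x ⬝ᵥ x) ≤ x ⬝ᵥ (Γ *ᵥ x) := by
  classical
  set U : Matrix (Fin m) (Fin m) ℝ := (hΓ.1.eigenvectorUnitary : Matrix (Fin m) (Fin m) ℝ) with hU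
  have hsp : Γ = U * Matrix.diagonal (RCLike.ofReal ∘ hΓ.1.eigenvalues) * star U :=
    hΓ.1.spectral_theorem
  have hunit : U * star U = 1 := (Unitary.mem_iff.mp (hΓ.1.eigenvectorUnitary).2).2
  have hsU : star U = Uᵀ := by rw [Matrix.star_eq_conjTranspose]; simp
  set y : Fin m → ℝ := star U *ᵥ x with hy
  have h1 : x ⬝ᵥ (Γ *ᵥ x) = y ⬝ᵥ (Matrix.diagonal (RCLike.ofReal ∘ hΓ.1.eigenvalues) *ᵥ y) := by
    conv_lhs => rw [hsp]
    rw [← Matrix.mulVec_mulVec, ← Matrix.mulVec_mulVec, Matrix.dotProduct_mulVec x U,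
      ← Matrix.mulVec_transpose, hy, hsU]
  have h2 : y ⬝ᵥ y = x ⬝ᵥ x := by
    rw [hy, hsU, Matrix.dotProduct_mulVec, Matrix.vecMul_transpose, Matrix.mulVec_mulVec,
      ← hsU, hunit, Matrix.one_mulVec]
  rw [h1, ← h2]
  have hdiag : y ⬝ᵥ (Matrix.diagonal (RCLike.ofReal ∘ hΓ.1.eigenvalues) *ᵥ y)
      = ∑ i, hΓ.1.eigenvalues i * (y i)^2 := by
    simp [dotProduct, Matrix.mulVec_diagonal]
    congr 1; ext i; ring
  rw [hdiag, dotProduct, Finset.mul_sum]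
  exact Finset.sum_le_sum fun i _ => by nlinarith [mul_le_mul_of_nonneg_right (hlb i) (sq_nonneg (y i))]

lemma inv_norm_le {m : ℕ} (M : Matrix (Fin m) (Fin m) ℝ) (hM : M.PosDef) {γ : ℝ} (hγ : 0 < γ)
    (hq : ∀ x : Fin m → ℝ, γ * (x ⬝ᵥ x) ≤ x ⬝ᵥ (M *ᵥ x)) : ‖M⁻¹‖ ≤ 1 / γ := by
  apply opNorm_le_bound' _ (by positivity)
  intro x
  set z := M⁻¹ *ᵥ x with hz
  have hMz : M *ᵥ z = x := by
    rw [hz, Matrix.mulVec_mulVec, Matrix.mul_nonsing_inv _ hM.det_pos.ne'.isUnit,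
      Matrix.one_mulVec]
  have h1 : γ * ‖toE z‖ ^ 2 ≤ ‖toE z‖ * ‖toE x‖ := by
    calc γ * ‖toE z‖ ^ 2 = γ * (z ⬝ᵥ z) := by rw [norm_toE_sq]
      _ ≤ z ⬝ᵥ (M *ᵥ z) := hq z
      _ = z ⬝ᵥ x := by rw [hMz]
      _ ≤ ‖toE z‖ * ‖toE x‖ := dot_le_norm_mul _ _
  rcases eq_or_lt_of_le (norm_nonneg (toE z)) with h0 | h0
  · rw [← h0]; positivity
  · rw [div_mul_eq_mul_div, le_div_iff₀ hγ]
    nlinarith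

lemma opNorm_mul₃_le {a b c e : ℕ} (A : Matrix (Fin a) (Fin b) ℝ) (B : Matrix (Fin b) (Fin c) ℝ)
    (D : Matrix (Fin c) (Fin e) ℝ) : ‖A * B * D‖ ≤ ‖A‖ * ‖B‖ * ‖D‖ := by
  calc ‖A * B * D‖ ≤ ‖A * B‖ * ‖D‖ := Matrix.l2_opNorm_mul _ _
    _ ≤ ‖A‖ * ‖B‖ * ‖D‖ :=
        mul_le_mul_of_nonneg_right (Matrix.l2_opNorm_mul _ _) (norm_nonneg _)

end Aux

section Main
open scoped Matrix.Norms.L2Operator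

set_option maxHeartbeats 2000000 in
/-- continuity of the Kalman gain in the covariance:
|K - K^ML| ≤ (|H|/γmin)(1 + 2|KH|) |C - C^ML|. -/
theorem gain_continuity {m d : ℕ}
    (Γ : Matrix (Fin m) (Fin m) ℝ) (hΓ : Γ.PosDef)
    (γmin : ℝ) (hγpos : 0 < γmin)
    (hγmin : IsLeast (Set.range hΓ.1.eigenvalues) γmin)
    (H : Matrix (Fin m) (Fin d) ℝ)
    (C CML CMLtil : Matrix (Fin d) (Fin d) ℝ)
    (hC : C.PosSemidef) (hCML : CML.IsSymm)
    (lam : Fin d → ℝ) (q : Fin d → (Fin d → ℝ))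
    (horth : ∀ k l, q k ⬝ᵥ q l = if k = l then (1 : ℝ) else 0)
    (hdecomp : CML = ∑ k, lam k • Matrix.vecMulVec (q k) (q k))
    (htrunc : CMLtil = ∑ k ∈ Finset.univ.filter (fun k => 0 < lam k),
      lam k • Matrix.vecMulVec (q k) (q k))
    (K KML : Matrix (Fin d) (Fin m) ℝ)
    (hK : K = C * Hᵀ * (H * C * Hᵀ + Γ)⁻¹)
    (hKML : KML = CML * Hᵀ * (H * CMLtil * Hᵀ + Γ)⁻¹) :
    opNorm (K - KML) ≤ opNorm H / γmin * (1 + 2 * opNorm (K * H)) * opNorm (C - CML) := by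
  classical
  simp only [opNorm_eq_l2]
  have hstar : ∀ {k : ℕ} (x : Fin k → ℝ), star x = x := fun x => funext fun i => rfl
  have hconj : Hᴴ = Hᵀ := by ext i j; simp [Matrix.conjTranspose_apply]
  have hHt : ‖Hᵀ‖ = ‖H‖ := by rw [← hconj]; exact Matrix.l2_opNorm_conjTranspose H
  -- CMLtil is positive semidefinite
  have hCt : CMLtil.PosSemidef := by
    refine Matrix.PosSemidef.of_dotProduct_mulVec_nonneg ?_ ?_
    · show CMLtilᴴ = CMLtil
      rw [htrunc]
      ext i j
      simp only [Matrix.conjTranspose_apply, Matrix.sum_apply, Matrix.smul_apply,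
        Matrix.vecMulVec_apply, smul_eq_mul, star_trivial]
      exact Finset.sum_congr rfl fun k _ => by ring
    · intro x
      rw [hstar, htrunc, sum_mulVec', dot_sum']
      refine Finset.sum_nonneg fun k hk => ?_
      rw [Matrix.smul_mulVec, vecMulVec_mulVec, smul_smul, dotProduct_smul]
      have hpos : 0 < lam k := (Finset.mem_filter.mp hk).2
      have : x ⬝ᵥ q k = q k ⬝ᵥ x := dotProduct_comm _ _
      rw [smul_eq_mul, this]
      nlinarith [sq_nonneg (q k ⬝ᵥ x)]
  -- positive definiteness of the two "innovation" matrices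
  have hHCH : (H * C * Hᵀ).PosSemidef := by
    have := hC.mul_mul_conjTranspose_same H
    simpa [Matrix.conjTranspose_eq_transpose_of_trivial] using this
  have hHCtH : (H * CMLtil * Hᵀ).PosSemidef := by
    have := hCt.mul_mul_conjTranspose_same H
    simpa [Matrix.conjTranspose_eq_transpose_of_trivial] using this
  have hS_pd : (H * C * Hᵀ + Γ).PosDef := Matrix.PosDef.posSemidef_add hHCH hΓ
  have hSt_pd : (H * CMLtil * Hᵀ + Γ).PosDef := Matrix.PosDef.posSemidef_add hHCtH hΓ
  -- lower bound on the quadratic form of St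
  have hlb : ∀ i, γmin ≤ hΓ.1.eigenvalues i := fun i => hγmin.2 ⟨i, rfl⟩
  have hquad : ∀ x : Fin m → ℝ, γmin * (x ⬝ᵥ x) ≤ x ⬝ᵥ ((H * CMLtil * Hᵀ + Γ) *ᵥ x) := by
    intro x
    have h1 := posdef_quad_lower Γ hΓ γmin hlb x
    have h2 : 0 ≤ x ⬝ᵥ ((H * CMLtil * Hᵀ) *ᵥ x) := by
      have := hHCtH.dotProduct_mulVec_nonneg x
      rwa [hstar] at this
    rw [Matrix.add_mulVec, dotProduct_add]
    linarith
  -- norm bound on St⁻¹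
  have hInv : ‖(H * CMLtil * Hᵀ + Γ)⁻¹‖ ≤ 1 / γmin :=
    inv_norm_le _ hSt_pd hγpos hquad
  -- replace the two innovation matrices by opaque constants
  obtain ⟨S, hSdef⟩ : ∃ S', S' = H * C * Hᵀ + Γ := ⟨_, rfl⟩
  obtain ⟨St, hStdef⟩ : ∃ St', St' = H * CMLtil * Hᵀ + Γ := ⟨_, rfl⟩
  rw [← hSdef] at hK hS_pd
  rw [← hStdef] at hKML hSt_pd hInv
  -- the eigenvalue bound: for every k with lam k ≤ 0, |lam k| ≤ β
  set β := ‖C - CML‖ with hβdef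
  have hβ0 : 0 ≤ β := norm_nonneg _
  have hqCML : ∀ k, q k ⬝ᵥ (CML *ᵥ q k) = lam k := by
    intro k
    rw [hdecomp, sum_mulVec', dot_sum']
    have : ∀ j, q k ⬝ᵥ ((lam j • Matrix.vecMulVec (q j) (q j)) *ᵥ q k)
        = lam j * (if j = k then (1:ℝ) else 0) * (if k = j then (1:ℝ) else 0) := by
      intro j
      rw [Matrix.smul_mulVec, vecMulVec_mulVec, smul_smul, dotProduct_smul,
        horth j k, horth k j, smul_eq_mul]
    rw [Finset.sum_congr rfl fun j _ => this j, Finset.sum_eq_single k]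
    · simp
    · intro l _ hne; simp [if_neg hne, if_neg (Ne.symm hne)]
    · simp
  have hβk : ∀ k ∈ Finset.univ.filter (fun k => ¬ 0 < lam k), |lam k| ≤ β := by
    intro k hk
    have hle : lam k ≤ 0 := le_of_not_gt (Finset.mem_filter.mp hk).2
    have hCq : 0 ≤ q k ⬝ᵥ (C *ᵥ q k) := by
      have := hC.dotProduct_mulVec_nonneg (q k); rwa [hstar] at this
    have hquadk : q k ⬝ᵥ ((C - CML) *ᵥ q k) = q k ⬝ᵥ (C *ᵥ q k) - lam k := by
      rw [Matrix.sub_mulVec, dotProduct_sub, hqCML]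
    have hone : q k ⬝ᵥ q k = 1 := by simpa using horth k k
    have hup := quad_le_opNorm (C - CML) (q k) hone
    rw [hquadk] at hup
    rw [abs_of_nonpos hle]
    linarith
  -- truncation bound: ‖CML - CMLtil‖ ≤ β
  have hsplit : CML - CMLtil = ∑ k ∈ Finset.univ.filter (fun k => ¬ 0 < lam k),
      lam k • Matrix.vecMulVec (q k) (q k) := by
    rw [hdecomp, htrunc, sub_eq_iff_eq_add', Finset.sum_filter_add_sum_filter_not]
  have hdiff : ‖CML - CMLtil‖ ≤ β := by
    rw [hsplit]
    exact trunc_norm_le lam q horth _ β hβ0 hβk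
  have hdiff2 : ‖CMLtil - C‖ ≤ 2 * β := by
    calc ‖CMLtil - C‖ = ‖(CMLtil - CML) + (CML - C)‖ := by abel_nf
      _ ≤ ‖CMLtil - CML‖ + ‖CML - C‖ := norm_add_le _ _
      _ ≤ β + β := by
          rw [norm_sub_rev CMLtil CML, norm_sub_rev CML C]
          exact add_le_add hdiff le_rfl
      _ = 2 * β := by ring
  -- invertibility facts
  have e1 : S⁻¹ * S = 1 := Matrix.nonsing_inv_mul _ hS_pd.det_pos.ne'.isUnit
  have e2 : St * St⁻¹ = 1 := Matrix.mul_nonsing_inv _ hSt_pd.det_pos.ne'.isUnit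
  -- the key algebraic identity
  have expand : (C * Hᵀ * S⁻¹ * H) * (CMLtil - C) * Hᵀ * St⁻¹
      = C * Hᵀ * S⁻¹ - C * Hᵀ * St⁻¹ := by
    have h2 : H * (CMLtil - C) * Hᵀ = St - S := by
      rw [hStdef, hSdef, add_sub_add_right_eq_sub, Matrix.mul_sub, Matrix.sub_mul]
    calc (C * Hᵀ * S⁻¹ * H) * (CMLtil - C) * Hᵀ * St⁻¹
        = C * Hᵀ * S⁻¹ * (H * (CMLtil - C) * Hᵀ) * St⁻¹ := by
          simp only [Matrix.mul_assoc]
      _ = C * Hᵀ * S⁻¹ * (St - S) * St⁻¹ := by rw [h2]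
      _ = C * Hᵀ * (S⁻¹ * (St * St⁻¹)) - C * Hᵀ * ((S⁻¹ * S) * St⁻¹) := by
          rw [Matrix.mul_sub, Matrix.sub_mul]
          simp only [Matrix.mul_assoc]
      _ = C * Hᵀ * S⁻¹ - C * Hᵀ * St⁻¹ := by rw [e1, e2, Matrix.mul_one, Matrix.one_mul]
  have key : K - KML = (C - CML) * Hᵀ * St⁻¹ + (K * H) * (CMLtil - C) * Hᵀ * St⁻¹ := by
    rw [hK, hKML]
    calc C * Hᵀ * S⁻¹ - CML * Hᵀ * St⁻¹
        = (C - CML) * Hᵀ * St⁻¹ + ((C * Hᵀ * S⁻¹ * H) * (CMLtil - C) * Hᵀ * St⁻¹) := by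
          rw [expand, Matrix.sub_mul, Matrix.sub_mul]
          abel
      _ = (C - CML) * Hᵀ * St⁻¹ + (C * Hᵀ * S⁻¹ * H) * (CMLtil - C) * Hᵀ * St⁻¹ := rfl
  -- final norm estimates
  have hT1 : ‖(C - CML) * Hᵀ * St⁻¹‖ ≤ β * ‖H‖ * (1 / γmin) := by
    calc ‖(C - CML) * Hᵀ * St⁻¹‖ ≤ ‖C - CML‖ * ‖Hᵀ‖ * ‖St⁻¹‖ := opNorm_mul₃_le _ _ _
      _ ≤ β * ‖H‖ * (1 / γmin) := by
          rw [hHt]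
          exact mul_le_mul_of_nonneg_left hInv (by positivity)
  have hT2 : ‖(K * H) * (CMLtil - C) * Hᵀ * St⁻¹‖ ≤ ‖K * H‖ * (2 * β) * ‖H‖ * (1 / γmin) := by
    calc ‖(K * H) * (CMLtil - C) * Hᵀ * St⁻¹‖
        ≤ ‖(K * H) * (CMLtil - C)‖ * ‖Hᵀ‖ * ‖St⁻¹‖ := opNorm_mul₃_le _ _ _
      _ ≤ (‖K * H‖ * (2 * β)) * ‖H‖ * (1 / γmin) := by
          rw [hHt]
          have hx : ‖(K * H) * (CMLtil - C)‖ ≤ ‖K * H‖ * (2 * β) := by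
            calc ‖(K * H) * (CMLtil - C)‖ ≤ ‖K * H‖ * ‖CMLtil - C‖ := Matrix.l2_opNorm_mul _ _
              _ ≤ ‖K * H‖ * (2 * β) := mul_le_mul_of_nonneg_left hdiff2 (norm_nonneg _)
          have h1 : ‖(K * H) * (CMLtil - C)‖ * ‖H‖ ≤ (‖K * H‖ * (2 * β)) * ‖H‖ :=
            mul_le_mul_of_nonneg_right hx (norm_nonneg _)
          have h2 : ‖(K * H) * (CMLtil - C)‖ * ‖H‖ * ‖St⁻¹‖
              ≤ (‖K * H‖ * (2 * β)) * ‖H‖ * ‖St⁻¹‖ :=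
            mul_le_mul_of_nonneg_right h1 (norm_nonneg _)
          have h3 : (‖K * H‖ * (2 * β)) * ‖H‖ * ‖St⁻¹‖ ≤ (‖K * H‖ * (2 * β)) * ‖H‖ * (1 / γmin) :=
            mul_le_mul_of_nonneg_left hInv (by positivity)
          linarith
      _ = ‖K * H‖ * (2 * β) * ‖H‖ * (1 / γmin) := rfl
  calc ‖K - KML‖
      ≤ ‖(C - CML) * Hᵀ * St⁻¹‖ + ‖(K * H) * (CMLtil - C) * Hᵀ * St⁻¹‖ := by
        rw [key]; exact norm_add_le _ _
    _ ≤ β * ‖H‖ * (1 / γmin) + ‖K * H‖ * (2 * β) * ‖H‖ * (1 / γmin) := add_le_add hT1 hT2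
    _ = ‖H‖ / γmin * (1 + 2 * ‖K * H‖) * β := by ring

end Main
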